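/- Let $Z$ be a non-negative random variable with $\psi_p$-Orlicz norm equal to $\nu$ for some $p \ge 1$, and let $c > 0$. Then $\mathbb{E}[Z^2 \cdot \mathbb{1}(Z \ge c)] \le (2c^2 + 4c\nu + 4\nu^2) \exp(-c^p/\nu^p)$. -/

import Mathlib

open MeasureTheory ProbabilityTheory Real

/-- The `ψ_p`-Orlicz norm of a random variable `Z`:
`inf {t > 0 : E[exp((|Z|/t)^p)] ≤ 2}` (equivalently `E[exp((|Z|/t)^p) - 1] ≤ 1`
for a probability measure). -/
noncomputable def orliczNorm (p : ℝ) {Ω : Type*} [MeasurableSpace Ω] (μ : Measure Ω)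
    (Z : Ω → ℝ) : ℝ :=
  sInf {t : ℝ | 0 < t ∧ ∫ ω, Real.exp ((|Z ω| / t) ^ p) ∂μ ≤ 2}

lemma rpow_superadd_aux {a b p : ℝ} (ha : 0 ≤ a) (hb : 0 ≤ b) (hp : 1 ≤ p) :
    a ^ p + b ^ p ≤ (a + b) ^ p := by
  have h1 := NNReal.add_rpow_le_rpow_add (a.toNNReal) (b.toNNReal) hp
  have h : ((a.toNNReal : ℝ) = a) := Real.coe_toNNReal a ha
  have h2 : ((b.toNNReal : ℝ) = b) := Real.coe_toNNReal b hb
  have h3 := NNReal.coe_le_coe.2 h1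
  rwa [NNReal.coe_add, NNReal.coe_rpow, NNReal.coe_rpow, NNReal.coe_rpow, NNReal.coe_add,
    h, h2] at h3

lemma key_pointwise_aux {p c t z : ℝ} (hp : 1 ≤ p) (hc : 0 < c) (ht : 0 < t) (hz : 0 ≤ z) :
    z ^ 2 * (if c ≤ z then (1 : ℝ) else 0) ≤
      (c ^ 2 + 2 * c * t + 2 * t ^ 2) * Real.exp (-((c / t) ^ p)) * Real.exp ((z / t) ^ p) := by
  have hK : (0:ℝ) < c ^ 2 + 2 * c * t + 2 * t ^ 2 := by positivity
  split_ifs with hcz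
  · rw [mul_one, mul_assoc, ← Real.exp_add]
    have hx : 0 ≤ (z - c) / t := div_nonneg (sub_nonneg.2 hcz) ht.le
    have hsup : (c / t) ^ p + ((z - c) / t) ^ p ≤ (z / t) ^ p := by
      have := rpow_superadd_aux (by positivity : (0:ℝ) ≤ c / t) hx hp
      rwa [← add_div, add_sub_cancel] at this
    have hexp : Real.exp (((z - c) / t) ^ p) ≤ Real.exp (-(c / t) ^ p + (z / t) ^ p) := by
      apply Real.exp_le_exp.2; linarith
    set x := (z - c) / t with hxdef
    have hzx : z = c + t * x := by rw [hxdef, mul_div_cancel₀ (z - c) ht.ne']; ring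
    rcases le_total x 1 with h1 | h1
    · have hzct : z ≤ c + t := by nlinarith
      have hz2 : z ^ 2 ≤ c ^ 2 + 2 * c * t + 2 * t ^ 2 := by nlinarith
      have : (1:ℝ) ≤ Real.exp (-(c / t) ^ p + (z / t) ^ p) := by
        refine le_trans ?_ hexp
        exact Real.one_le_exp (by positivity)
      nlinarith
    · have hxp : x ≤ x ^ p := by
        calc x = x ^ (1:ℝ) := (Real.rpow_one x).symm
          _ ≤ x ^ p := Real.rpow_le_rpow_of_exponent_le h1 hp
      have hq : 1 + x + x ^ 2 / 2 ≤ Real.exp (x ^ p) := by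
        refine le_trans (Real.quadratic_le_exp_of_nonneg hx) ?_
        exact Real.exp_le_exp.2 hxp
      have hfin : 1 + x + x ^ 2 / 2 ≤ Real.exp (-(c / t) ^ p + (z / t) ^ p) :=
        le_trans hq hexp
      nlinarith [sq_nonneg x, mul_pos hc ht]
  · have : (0:ℝ) ≤ (c ^ 2 + 2 * c * t + 2 * t ^ 2) * Real.exp (-((c / t) ^ p)) *
        Real.exp ((z / t) ^ p) := by positivity
    simpa using this

/-- If `Z ≥ 0` has `ψ_p`-Orlicz norm `ν` for some `p ≥ 1` and `c > 0`, then
`E[Z² ⋅ 1(Z ≥ c)] ≤ (2c² + 4cν + 4ν²) exp(-c^p/ν^p)`. -/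
theorem stmt1 {Ω : Type*} [MeasurableSpace Ω] (μ : Measure Ω) [IsProbabilityMeasure μ]
    (p : ℝ) (hp : 1 ≤ p) (Z : Ω → ℝ) (hZ : ∀ ω, 0 ≤ Z ω)
    (ν : ℝ) (hν : 0 < ν) (hnorm : orliczNorm p μ Z = ν) (c : ℝ) (hc : 0 < c) :
    ∫ ω, (Z ω) ^ 2 * (if c ≤ Z ω then (1 : ℝ) else 0) ∂μ ≤
      (2 * c ^ 2 + 4 * c * ν + 4 * ν ^ 2) * Real.exp (-(c ^ p / ν ^ p)) := by
  have habs : ∀ ω, |Z ω| = Z ω := fun ω => abs_of_nonneg (hZ ω)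
  rw [orliczNorm] at hnorm
  simp only [habs] at hnorm
  set S : Set ℝ := {t : ℝ | 0 < t ∧ ∫ ω, Real.exp ((Z ω / t) ^ p) ∂μ ≤ 2} with hSdef
  have hp0 : p ≠ 0 := by linarith
  have hSne : S.Nonempty := by
    by_contra h
    rw [Set.not_nonempty_iff_eq_empty] at h
    rw [h, Real.sInf_empty] at hnorm
    linarith
  have hbdd : BddBelow S := ⟨0, fun x hx => hx.1.le⟩
  have hlb : ∀ s ∈ S, ν ≤ s := fun s hs => hnorm ▸ csInf_le hbdd hs
  have hs0 : (0:ℝ) < ν / 2 := by linarith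
  have hgt2 : 2 < ∫ ω, Real.exp ((Z ω / (ν / 2)) ^ p) ∂μ := by
    by_contra h
    have : ν / 2 ∈ S := ⟨hs0, le_of_not_gt h⟩
    have := hlb _ this
    linarith
  have hg_int : Integrable (fun ω => Real.exp ((Z ω / (ν / 2)) ^ p)) μ := by
    by_contra h
    rw [integral_undef h] at hgt2; linarith
  -- a.e. measurability of Z
  have hZmeas : AEMeasurable Z μ := by
    have hfm : Measurable (fun x : ℝ => (ν / 2) * Real.log x ^ p⁻¹) :=
      (((Real.continuous_rpow_const (by positivity)).measurable.comp
        Real.measurable_log).const_mul _)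
    have heq : Z = (fun x : ℝ => (ν / 2) * Real.log x ^ p⁻¹) ∘
        (fun ω => Real.exp ((Z ω / (ν / 2)) ^ p)) := by
      funext ω
      have h1 : 0 ≤ Z ω / (ν / 2) := div_nonneg (hZ ω) hs0.le
      simp only [Function.comp_apply, Real.log_exp, Real.rpow_rpow_inv h1 hp0]
      field_simp
    rw [heq]
    exact hfm.comp_aemeasurable hg_int.aestronglyMeasurable.aemeasurable
  -- integrability of exp((Z/u)^p) for u ≥ ν/2
  have hint : ∀ u : ℝ, ν / 2 ≤ u → Integrable (fun ω => Real.exp ((Z ω / u) ^ p)) μ := by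
    intro u hu
    have hu0 : (0:ℝ) < u := lt_of_lt_of_le hs0 hu
    refine hg_int.mono' ?_ ?_
    · exact ((Real.measurable_exp.comp ((Real.continuous_rpow_const
        (by positivity)).measurable.comp (measurable_id.div_const u))).comp_aemeasurable
        hZmeas).aestronglyMeasurable
    · filter_upwards with ω
      rw [Real.norm_eq_abs, Real.abs_exp]
      apply Real.exp_le_exp.2
      apply Real.rpow_le_rpow (div_nonneg (hZ ω) hu0.le) ?_ (by positivity)
      exact div_le_div_of_nonneg_left (hZ ω) hs0 hu
  -- the integral bound for every t > ν
  have hle2 : ∀ t : ℝ, ν < t → ∫ ω, Real.exp ((Z ω / t) ^ p) ∂μ ≤ 2 := by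
    intro t ht
    obtain ⟨s, hsS, hst⟩ := exists_lt_of_csInf_lt hSne (by rw [hnorm]; exact ht)
    have hνs : ν ≤ s := hlb s hsS
    calc ∫ ω, Real.exp ((Z ω / t) ^ p) ∂μ
        ≤ ∫ ω, Real.exp ((Z ω / s) ^ p) ∂μ := by
          refine integral_mono (hint t (by linarith)) (hint s (by linarith)) (fun ω => ?_)
          apply Real.exp_le_exp.2
          apply Real.rpow_le_rpow (div_nonneg (hZ ω) (by linarith)) ?_ (by positivity)
          exact div_le_div_of_nonneg_left (hZ ω) hsS.1 hst.le
      _ ≤ 2 := hsS.2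
  -- main estimate for every t > ν
  have hmain : ∀ t : ℝ, ν < t →
      ∫ ω, (Z ω) ^ 2 * (if c ≤ Z ω then (1 : ℝ) else 0) ∂μ ≤
        (2 * c ^ 2 + 4 * c * t + 4 * t ^ 2) * Real.exp (-(c ^ p / t ^ p)) := by
    intro t ht
    have ht0 : (0:ℝ) < t := lt_trans hν ht
    have hdiv : (c / t) ^ p = c ^ p / t ^ p := Real.div_rpow hc.le ht0.le p
    have hRint : Integrable (fun ω => (c ^ 2 + 2 * c * t + 2 * t ^ 2) *
        Real.exp (-((c / t) ^ p)) * Real.exp ((Z ω / t) ^ p)) μ :=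
      (hint t (by linarith)).const_mul _
    have hLint : Integrable (fun ω => (Z ω) ^ 2 * (if c ≤ Z ω then (1 : ℝ) else 0)) μ := by
      refine hRint.mono' ?_ ?_
      · exact (((measurable_id.pow_const 2).mul (Measurable.ite
          (measurableSet_le measurable_const measurable_id) measurable_const
          measurable_const)).comp_aemeasurable hZmeas).aestronglyMeasurable
      · filter_upwards with ω
        have hnn : (0:ℝ) ≤ (Z ω) ^ 2 * (if c ≤ Z ω then (1 : ℝ) else 0) := by
          split_ifs <;> simp [sq_nonneg]
        rw [Real.norm_eq_abs, abs_of_nonneg hnn]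
        exact key_pointwise_aux hp hc ht0 (hZ ω)
    calc ∫ ω, (Z ω) ^ 2 * (if c ≤ Z ω then (1 : ℝ) else 0) ∂μ
        ≤ ∫ ω, (c ^ 2 + 2 * c * t + 2 * t ^ 2) * Real.exp (-((c / t) ^ p)) *
            Real.exp ((Z ω / t) ^ p) ∂μ :=
          integral_mono hLint hRint (fun ω => key_pointwise_aux hp hc ht0 (hZ ω))
      _ = (c ^ 2 + 2 * c * t + 2 * t ^ 2) * Real.exp (-((c / t) ^ p)) *
            ∫ ω, Real.exp ((Z ω / t) ^ p) ∂μ := integral_const_mul _ _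
      _ ≤ (c ^ 2 + 2 * c * t + 2 * t ^ 2) * Real.exp (-((c / t) ^ p)) * 2 := by
          refine mul_le_mul_of_nonneg_left (hle2 t ht) (by positivity)
      _ = (2 * c ^ 2 + 4 * c * t + 4 * t ^ 2) * Real.exp (-(c ^ p / t ^ p)) := by
          rw [hdiv]; ring
  -- pass to the limit t → ν⁺
  have hcont : ContinuousAt
      (fun t : ℝ => (2 * c ^ 2 + 4 * c * t + 4 * t ^ 2) * Real.exp (-(c ^ p / t ^ p))) ν := by
    apply ContinuousAt.mul
    · fun_prop
    · apply Real.continuous_exp.continuousAt.comp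
      apply ContinuousAt.neg
      exact ContinuousAt.div continuousAt_const
        (Real.continuousAt_rpow_const ν p (Or.inl hν.ne')) (Real.rpow_pos_of_pos hν p).ne'
  have hlim : Filter.Tendsto
      (fun t : ℝ => (2 * c ^ 2 + 4 * c * t + 4 * t ^ 2) * Real.exp (-(c ^ p / t ^ p)))
      (nhdsWithin ν (Set.Ioi ν))
      (nhds ((2 * c ^ 2 + 4 * c * ν + 4 * ν ^ 2) * Real.exp (-(c ^ p / ν ^ p)))) :=
    hcont.tendsto.mono_left nhdsWithin_le_nhds
  refine ge_of_tendsto hlim ?_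
  filter_upwards [self_mem_nhdsWithin] with t ht
  exact hmain t ht
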